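/- Every zigzag path b of length n ≥ 1 factors as b = zₙ ∘ ρ, where zₙ : [0,1] → [0,1] is the standard piecewise-affine zigzag of length n (zₙ is affine on each interval [(i−1)/n, i/n] with zₙ((i−1)/n) and zₙ(i/n) equal alternately to 0 and 1, starting with zₙ(0) = 0), and ρ : [0,1] → [0,1] is a continuous nondecreasing surjection with ρ(0) = 0 and ρ(1) = 1. (Every controlled path of c𝕀∼ is a global reparametrisation of a standard concatenation of the generators î and r.) -/

import Mathlib

open Set

/-- A continuous map `b : [0,1] → [0,1]` is a *zigzag path of length `n`* (see Context). -/
def IsZigzag (b : ℝ → ℝ) (n : ℕ) : Prop :=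
  ContinuousOn b (Icc 0 1) ∧ (∀ t ∈ Icc (0:ℝ) 1, b t ∈ Icc (0:ℝ) 1) ∧
  ((n = 0 ∧ ∀ t ∈ Icc (0:ℝ) 1, b t = 0) ∨
   (1 ≤ n ∧ ∃ t : ℕ → ℝ, t 0 = 0 ∧ t n = 1 ∧
     (∀ i < n, t i < t (i + 1)) ∧
     (∀ i ≤ n, b (t i) = if Odd i then 1 else 0) ∧
     (∀ i, 1 ≤ i → i ≤ n →
       if Odd i then MonotoneOn b (Icc (t (i - 1)) (t i))
       else AntitoneOn b (Icc (t (i - 1)) (t i)))))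

/-- The standard piecewise-affine zigzag of length `n`: it is affine on each interval
`[(i-1)/n, i/n]`, with values at the points `i/n` equal alternately to `0` and `1`,
starting with `0` at `0`. (Concretely, the triangle wave `y ↦ 1 - |1 - (y mod 2)|`
evaluated at `y = n * x`.) -/
noncomputable def stdZigzag (n : ℕ) (x : ℝ) : ℝ :=
  1 - |1 - ((n : ℝ) * x - 2 * ⌊((n : ℝ) * x) / 2⌋)|

namespace ZigzagAux

noncomputable def ψ (b : ℝ → ℝ) (i : ℕ) (s : ℝ) : ℝ := if Odd i then b s else 1 - b s

noncomputable def clamp (t : ℕ → ℝ) (j : ℕ) (s : ℝ) : ℝ := max (t j) (min (t (j+1)) s)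

noncomputable def φ (b : ℝ → ℝ) (t : ℕ → ℝ) (j : ℕ) (s : ℝ) : ℝ := ψ b (j+1) (clamp t j s)

noncomputable def ρ (b : ℝ → ℝ) (t : ℕ → ℝ) (n : ℕ) (s : ℝ) : ℝ :=
  (∑ j ∈ Finset.range n, φ b t j s) / n

end ZigzagAux

lemma stdZigzag_eval {n : ℕ} (hn : 0 < n) (j : ℕ) {u : ℝ} (hu0 : 0 ≤ u) (hu1 : u ≤ 1) :
    stdZigzag n (((j : ℝ) + u) / n) = if Odd j then 1 - u else u := by
  have hnR : (0:ℝ) < n := by exact_mod_cast hn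
  have hx : (n : ℝ) * (((j : ℝ) + u) / n) = (j : ℝ) + u := by field_simp
  unfold stdZigzag
  rw [hx]
  rcases Nat.even_or_odd j with ⟨m, hm⟩ | ⟨m, hm⟩
  · have hjR : (j : ℝ) = 2 * m := by rw [hm]; push_cast; ring
    have hodd : ¬ Odd j := by simp [Nat.not_odd_iff_even.mpr ⟨m, hm⟩]
    have hfloor : ⌊((j : ℝ) + u) / 2⌋ = (m : ℤ) := by
      rw [Int.floor_eq_iff]
      constructor
      · rw [hjR]; push_cast; linarith
      · rw [hjR]; push_cast; linarith
    rw [hfloor, hjR, if_neg hodd]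
    push_cast
    rw [show (1:ℝ) - (2*m + u - 2*m) = 1 - u by ring, abs_of_nonneg (by linarith)]
    ring
  · have hjR : (j : ℝ) = 2 * m + 1 := by rw [hm]; push_cast; ring
    have hodd : Odd j := ⟨m, hm⟩
    rw [if_pos hodd]
    rcases eq_or_lt_of_le hu1 with h1 | h1
    · subst h1
      have hfloor : ⌊((j : ℝ) + 1) / 2⌋ = (m : ℤ) + 1 := by
        rw [Int.floor_eq_iff]
        constructor
        · rw [hjR]; push_cast; linarith
        · rw [hjR]; push_cast; linarith
      rw [hfloor, hjR]
      push_cast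
      rw [show (1:ℝ) - (2*m+1+1 - 2*(m+1)) = 1 by ring, abs_one]
    · have hfloor : ⌊((j : ℝ) + u) / 2⌋ = (m : ℤ) := by
        rw [Int.floor_eq_iff]
        constructor
        · rw [hjR]; push_cast; linarith
        · rw [hjR]; push_cast; linarith
      rw [hfloor, hjR]
      push_cast
      rw [show (1:ℝ) - (2*m+1+u - 2*m) = -u by ring, abs_neg, abs_of_nonneg hu0]

open ZigzagAux in
theorem zigzag_factor' (b : ℝ → ℝ) (n : ℕ) (hn : 1 ≤ n)
    (hbc : ContinuousOn b (Icc 0 1)) (hbI : ∀ s ∈ Icc (0:ℝ) 1, b s ∈ Icc (0:ℝ) 1)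
    (t : ℕ → ℝ) (ht0 : t 0 = 0) (htn : t n = 1)
    (htlt : ∀ i < n, t i < t (i + 1))
    (htval : ∀ i ≤ n, b (t i) = if Odd i then 1 else 0)
    (htm : ∀ i, 1 ≤ i → i ≤ n →
       if Odd i then MonotoneOn b (Icc (t (i - 1)) (t i))
       else AntitoneOn b (Icc (t (i - 1)) (t i))) :
    ∃ ρ : ℝ → ℝ, ContinuousOn ρ (Icc 0 1) ∧ MonotoneOn ρ (Icc 0 1) ∧
      ρ '' Icc 0 1 = Icc 0 1 ∧ ρ 0 = 0 ∧ ρ 1 = 1 ∧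
      ∀ s ∈ Icc (0:ℝ) 1, b s = stdZigzag n (ρ s) := by
  classical
  have hn0 : 0 < n := hn
  have hnR : (0:ℝ) < n := by exact_mod_cast hn0
  have hnR' : (n:ℝ) ≠ 0 := ne_of_gt hnR
  -- monotonicity of the subdivision points
  have tmono : ∀ j, j ≤ n → ∀ i, i ≤ j → t i ≤ t j := by
    intro j
    induction j with
    | zero =>
      intro _ i hi
      obtain rfl : i = 0 := Nat.le_zero.mp hi
      exact le_rfl
    | succ k ih =>
      intro hk i hi
      by_cases h : i ≤ k
      · exact (ih (Nat.le_of_succ_le hk) i h).trans (le_of_lt (htlt k (Nat.lt_of_succ_le hk)))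
      · obtain rfl : i = k + 1 := by omega
        exact le_rfl
  have ht_mem : ∀ i, i ≤ n → t i ∈ Icc (0:ℝ) 1 := by
    intro i hi
    constructor
    · rw [← ht0]; exact tmono i hi 0 (Nat.zero_le _)
    · rw [← htn]; exact tmono n le_rfl i hi
  -- values of ψ at subdivision points
  have hψval0 : ∀ j < n, ψ b (j+1) (t j) = 0 := by
    intro j hj
    unfold ZigzagAux.ψ
    have hb' := htval j (le_of_lt hj)
    rcases Nat.even_or_odd j with he | ho
    · rw [if_pos he.add_one, hb', if_neg (Nat.not_odd_iff_even.mpr he)]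
    · rw [if_neg (Nat.not_odd_iff_even.mpr ho.add_one), hb', if_pos ho]; ring
  have hψval1 : ∀ j < n, ψ b (j+1) (t (j+1)) = 1 := by
    intro j hj
    unfold ZigzagAux.ψ
    have hb' := htval (j+1) (Nat.succ_le_of_lt hj)
    by_cases h : Odd (j+1)
    · rw [if_pos h, hb', if_pos h]
    · rw [if_neg h, hb', if_neg h]; ring
  have hψmem : ∀ i, ∀ s ∈ Icc (0:ℝ) 1, ψ b i s ∈ Icc (0:ℝ) 1 := by
    intro i s hs
    obtain ⟨h1, h2⟩ := hbI s hs
    unfold ZigzagAux.ψ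
    split <;> constructor <;> linarith
  have hψcont : ∀ i, ContinuousOn (ψ b i) (Icc (0:ℝ) 1) := by
    intro i
    unfold ZigzagAux.ψ
    by_cases h : Odd i
    · simp only [if_pos h]; exact hbc
    · simp only [if_neg h]; exact continuousOn_const.sub hbc
  have hψmono : ∀ j < n, MonotoneOn (ψ b (j+1)) (Icc (t j) (t (j+1))) := by
    intro j hj
    have h := htm (j+1) (Nat.le_add_left 1 j) (Nat.succ_le_of_lt hj)
    rw [Nat.add_sub_cancel] at h
    unfold ZigzagAux.ψ
    by_cases hodd : Odd (j+1)
    · rw [if_pos hodd] at h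
      simpa only [if_pos hodd] using h
    · rw [if_neg hodd] at h
      intro x hx y hy hxy
      simp only [if_neg hodd]
      have := h hx hy hxy
      linarith
  -- clamp facts
  have hclamp_mem : ∀ j < n, ∀ s, clamp t j s ∈ Icc (t j) (t (j+1)) := by
    intro j hj s
    exact ⟨le_max_left _ _, max_le (le_of_lt (htlt j hj)) (min_le_left _ _)⟩
  have hclamp_mono : ∀ j, Monotone (clamp t j) := fun j x y h =>
    max_le_max le_rfl (min_le_min le_rfl h)
  have hclamp_cont : ∀ j, Continuous (clamp t j) := fun j =>
    continuous_const.max (continuous_const.min continuous_id)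
  have hIccsub : ∀ j < n, Icc (t j) (t (j+1)) ⊆ Icc (0:ℝ) 1 := fun j hj =>
    Icc_subset_Icc (ht_mem j (le_of_lt hj)).1 (ht_mem (j+1) (Nat.succ_le_of_lt hj)).2
  have hclamp_eq : ∀ j s, t j ≤ s → s ≤ t (j+1) → clamp t j s = s := by
    intro j s h1 h2
    unfold ZigzagAux.clamp
    rw [min_eq_right h2, max_eq_right h1]
  have hclamp_left : ∀ j < n, ∀ s, s ≤ t j → clamp t j s = t j := by
    intro j hj s h
    unfold ZigzagAux.clamp
    rw [min_eq_right (h.trans (le_of_lt (htlt j hj))), max_eq_left h]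
  have hclamp_right : ∀ j < n, ∀ s, t (j+1) ≤ s → clamp t j s = t (j+1) := by
    intro j hj s h
    unfold ZigzagAux.clamp
    rw [min_eq_left h, max_eq_right (le_of_lt (htlt j hj))]
  -- φ facts
  have hφmono : ∀ j < n, Monotone (φ b t j) := by
    intro j hj x y hxy
    exact hψmono j hj (hclamp_mem j hj x) (hclamp_mem j hj y) (hclamp_mono j hxy)
  have hφcont : ∀ j < n, ContinuousOn (φ b t j) (Icc (0:ℝ) 1) := by
    intro j hj
    exact ContinuousOn.comp (hψcont (j+1)) (hclamp_cont j).continuousOn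
      (fun x _ => hIccsub j hj (hclamp_mem j hj x))
  -- key evaluation of ρ on a segment
  have hρ_eval : ∀ j < n, ∀ s, t j ≤ s → s ≤ t (j+1) →
      ρ b t n s = ((j:ℝ) + ψ b (j+1) s) / n := by
    intro j hj s hs1 hs2
    unfold ZigzagAux.ρ
    congr 1
    have hterm : ∀ k ∈ Finset.range n,
        φ b t k s = (if k < j then (1:ℝ) else 0) + (if k = j then ψ b (j+1) s else 0) := by
      intro k hk
      rw [Finset.mem_range] at hk
      rcases lt_trichotomy k j with h | h | h
      · have h1 : t (k+1) ≤ s := le_trans (tmono j (le_of_lt hj) (k+1) h) hs1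
        unfold ZigzagAux.φ
        rw [hclamp_right k hk s h1, hψval1 k hk, if_pos h, if_neg (ne_of_lt h)]
        ring
      · subst h
        unfold ZigzagAux.φ
        rw [hclamp_eq k s hs1 hs2, if_neg (lt_irrefl k), if_pos rfl]
        ring
      · have h1 : s ≤ t k := le_trans hs2 (tmono k (le_of_lt hk) (j+1) h)
        unfold ZigzagAux.φ
        rw [hclamp_left k hk s h1, hψval0 k hk, if_neg (not_lt_of_gt h), if_neg (ne_of_gt h)]
        ring
    rw [Finset.sum_congr rfl hterm, Finset.sum_add_distrib]
    congr 1
    · have h1 : ∀ k ∈ Finset.range n, (if k < j then (1:ℝ) else 0)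
          = (if k ∈ Finset.range j then (1:ℝ) else 0) := by
        intro k _; simp [Finset.mem_range]
      rw [Finset.sum_congr rfl h1, Finset.sum_ite_mem]
      have h2 : Finset.range n ∩ Finset.range j = Finset.range j := by
        ext k; simp only [Finset.mem_inter, Finset.mem_range]; omega
      rw [h2]
      simp
    · rw [Finset.sum_ite_eq' (Finset.range n) j (fun _ => ψ b (j+1) s),
        if_pos (Finset.mem_range.mpr hj)]
  -- endpoint values
  have hρ0 : ρ b t n 0 = 0 := by
    have heval := hρ_eval 0 hn0 0 (le_of_eq ht0) (by rw [← ht0]; exact le_of_lt (htlt 0 hn0))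
    have hv := hψval0 0 hn0
    rw [ht0] at hv
    rw [heval, hv]
    simp
  have hsucc : n - 1 + 1 = n := Nat.succ_pred_eq_of_pos hn0
  have hρ1 : ρ b t n 1 = 1 := by
    have hlt : n - 1 < n := Nat.pred_lt (Nat.pos_iff_ne_zero.mp hn0)
    have h1 : t (n-1) ≤ 1 := (ht_mem (n-1) (le_of_lt hlt)).2
    have h2 : (1:ℝ) ≤ t (n-1+1) := by rw [hsucc, htn]
    have heval := hρ_eval (n-1) hlt 1 h1 h2
    rw [heval]
    have ht1 : t (n-1+1) = 1 := by rw [hsucc, htn]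
    have hv := hψval1 (n-1) hlt
    rw [ht1] at hv
    rw [hv, Nat.cast_sub hn]
    field_simp
    push_cast; ring
  -- monotonicity of ρ
  have hρmonoG : Monotone (ρ b t n) := by
    intro x y hxy
    unfold ZigzagAux.ρ
    gcongr with j hj
    exact hφmono j (Finset.mem_range.mp hj) hxy
  have hρcont : ContinuousOn (ρ b t n) (Icc 0 1) := by
    unfold ZigzagAux.ρ
    exact (continuousOn_finset_sum _ (fun j hj => hφcont j (Finset.mem_range.mp hj))).div_const _
  -- segment membership
  have hseg : ∀ s ∈ Icc (0:ℝ) 1, ∃ j, j < n ∧ t j ≤ s ∧ s ≤ t (j+1) := by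
    intro s hs
    have hP : ∃ i, s ≤ t i := ⟨n, htn ▸ hs.2⟩
    have hile : s ≤ t (Nat.find hP) := Nat.find_spec hP
    have hin : Nat.find hP ≤ n := Nat.find_min' hP (htn ▸ hs.2)
    rcases Nat.eq_zero_or_pos (Nat.find hP) with h0 | hpos
    · have hs0 : s = 0 := le_antisymm (by rw [← ht0, ← h0]; exact hile) hs.1
      exact ⟨0, hn0, by rw [ht0, hs0], by
        rw [hs0, ← ht0]; exact le_of_lt (htlt 0 hn0)⟩
    · have hlt' : Nat.find hP - 1 < Nat.find hP := Nat.pred_lt (Nat.pos_iff_ne_zero.mp hpos)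
      have hnle : ¬ s ≤ t (Nat.find hP - 1) := Nat.find_min hP hlt'
      refine ⟨Nat.find hP - 1, lt_of_lt_of_le hlt' hin, le_of_not_ge hnle, ?_⟩
      have heq : Nat.find hP - 1 + 1 = Nat.find hP := by omega
      rw [heq]
      exact hile
  refine ⟨ρ b t n, hρcont, hρmonoG.monotoneOn _, ?_, hρ0, hρ1, ?_⟩
  · apply Subset.antisymm
    · rintro x ⟨s, hs, rfl⟩
      exact ⟨hρ0 ▸ hρmonoG hs.1, hρ1 ▸ hρmonoG hs.2⟩
    · have := intermediate_value_Icc (zero_le_one) hρcont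
      rwa [hρ0, hρ1] at this
  · intro s hs
    obtain ⟨j, hj, h1, h2⟩ := hseg s hs
    rw [hρ_eval j hj s h1 h2,
      stdZigzag_eval hn0 j (hψmem (j+1) s hs).1 (hψmem (j+1) s hs).2]
    unfold ZigzagAux.ψ
    rcases Nat.even_or_odd j with he | ho
    · rw [if_neg (Nat.not_odd_iff_even.mpr he), if_pos he.add_one]
    · rw [if_pos ho, if_neg (Nat.not_odd_iff_even.mpr ho.add_one)]
      ring

/-- Every zigzag path of length `n ≥ 1` is a global reparametrisation of the standard
zigzag of length `n`: `b = zₙ ∘ ρ` with `ρ : [0,1] → [0,1]` a continuous nondecreasing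
surjection fixing the endpoints. -/
theorem zigzag_factor_stdZigzag (b : ℝ → ℝ) (n : ℕ) (hn : 1 ≤ n) (hb : IsZigzag b n) :
    ∃ ρ : ℝ → ℝ, ContinuousOn ρ (Icc 0 1) ∧ MonotoneOn ρ (Icc 0 1) ∧
      ρ '' Icc 0 1 = Icc 0 1 ∧ ρ 0 = 0 ∧ ρ 1 = 1 ∧
      ∀ s ∈ Icc (0:ℝ) 1, b s = stdZigzag n (ρ s) := by
  obtain ⟨hbc, hbI, hcase⟩ := hb
  rcases hcase with ⟨h0, -⟩ | ⟨-, t, ht0, htn, htlt, htval, htm⟩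
  · omega
  exact zigzag_factor' b n hn hbc hbI t ht0 htn htlt htval htm
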